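/- Let Γ be a discrete group with 2-cocycle σ and let a be an element of the σ-twisted group von Neumann algebra vN(Γ,σ) on ℓ²(Γ). Then a is a positive operator if and only if its Fourier coefficient â : Γ → ℂ, defined by â(γ) = ⟨a δ_e, δ_γ⟩, is a σ-positive definite function. -/

import Mathlib

open scoped ComplexConjugate ComplexOrder ENNReal

section Aux

variable {Γ : Type*} [Group Γ] [DecidableEq Γ]

private lemma memℓp_twisted (σ : Γ → Γ → ℂ) (hσ_unit : ∀ x y, ‖σ x y‖ = 1) (γ : Γ)
    (f : lp (fun _ : Γ => ℂ) 2) :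
    Memℓp (fun γ' : Γ => (starRingEnd ℂ) (σ γ' γ) * f (γ' * γ)) 2 := by
  apply memℓp_gen
  have hs := (lp.memℓp f).summable (p := 2) (by norm_num)
  have h2 := ((Equiv.mulRight γ).summable_iff
    (f := fun i => ‖f i‖ ^ (2 : ℝ≥0∞).toReal)).mpr hs
  refine h2.congr fun i => ?_
  simp only [Function.comp_apply, Equiv.coe_mulRight]
  rw [norm_mul, RCLike.norm_conj, hσ_unit, one_mul]

/-- The twisted right regular representation. -/
noncomputable def rhoCLM (σ : Γ → Γ → ℂ) (hσ_unit : ∀ x y, ‖σ x y‖ = 1) (γ : Γ) :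
    lp (fun _ : Γ => ℂ) 2 →L[ℂ] lp (fun _ : Γ => ℂ) 2 :=
  LinearMap.mkContinuous
    { toFun := fun f =>
        ⟨fun γ' => (starRingEnd ℂ) (σ γ' γ) * f (γ' * γ), memℓp_twisted σ hσ_unit γ f⟩
      map_add' := fun f g => by
        ext γ'
        simp [mul_add]
        rfl
      map_smul' := fun c f => by
        ext γ'
        simp [lp.coeFn_smul]
        ring }
    1 (fun f => by
      rw [one_mul]
      refine lp.norm_le_of_tsum_le (by norm_num) (norm_nonneg f) ?_
      have h1 : ∀ γ' : Γ, ‖(starRingEnd ℂ) (σ γ' γ) * f (γ' * γ)‖ ^ (2 : ℝ≥0∞).toReal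
          = ((fun i => ‖f i‖ ^ (2 : ℝ≥0∞).toReal) ∘ (Equiv.mulRight γ)) γ' := fun γ' => by
        simp only [Function.comp_apply, Equiv.coe_mulRight]
        rw [norm_mul, RCLike.norm_conj, hσ_unit, one_mul]
      calc ∑' γ', ‖(starRingEnd ℂ) (σ γ' γ) * f (γ' * γ)‖ ^ (2 : ℝ≥0∞).toReal
          = ∑' γ' : Γ, ‖f (γ' * γ)‖ ^ (2 : ℝ≥0∞).toReal := tsum_congr (fun γ' => by
            rw [norm_mul, RCLike.norm_conj, hσ_unit, one_mul])
        _ = ∑' i, ‖f i‖ ^ (2 : ℝ≥0∞).toReal :=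
            (Equiv.mulRight γ).tsum_eq fun i => ‖f i‖ ^ (2 : ℝ≥0∞).toReal
        _ = ‖f‖ ^ (2 : ℝ≥0∞).toReal := (lp.norm_rpow_eq_tsum (by norm_num) f).symm
        _ ≤ ‖f‖ ^ (2 : ℝ≥0∞).toReal := le_rfl)

lemma rhoCLM_apply (σ : Γ → Γ → ℂ) (hσ_unit : ∀ x y, ‖σ x y‖ = 1) (γ : Γ)
    (f : lp (fun _ : Γ => ℂ) 2) (γ' : Γ) :
    (rhoCLM σ hσ_unit γ f) γ' = (starRingEnd ℂ) (σ γ' γ) * f (γ' * γ) := rfl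

end Aux

/-- an element `a` of the twisted group von Neumann algebra `vN(Γ,σ)` is a
positive operator iff its Fourier coefficient `â(γ) = ⟨a δ_e, δ_γ⟩ = (a δ_e)(γ)` is a
`σ`-positive definite function on `Γ`. -/
theorem mem_twistedGroupVonNeumannAlgebra_positive_iff {Γ : Type*} [Group Γ] [DecidableEq Γ]
    (σ : Γ → Γ → ℂ)
    (hσ_unit : ∀ x y, ‖σ x y‖ = 1)
    (hσ_cocycle : ∀ x y z, σ x y * σ (x * y) z = σ x (y * z) * σ y z)
    (hσ_one : σ 1 1 = 1)
    -- the σ-projective left regular representation on ℓ²(Γ)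
    (lam : Γ → (lp (fun _ : Γ => ℂ) 2 →L[ℂ] lp (fun _ : Γ => ℂ) 2))
    (hlam : ∀ (γ : Γ) (f : lp (fun _ : Γ => ℂ) 2) (γ' : Γ),
      (lam γ f) γ' = σ γ (γ⁻¹ * γ') * f (γ⁻¹ * γ'))
    -- M = vN(Γ,σ), the double commutant of {λ_σ(γ)}
    (M : Set (lp (fun _ : Γ => ℂ) 2 →L[ℂ] lp (fun _ : Γ => ℂ) 2))
    (hM : M = {a | ∀ b, (∀ γ : Γ, b * lam γ = lam γ * b) → a * b = b * a})
    (a : lp (fun _ : Γ => ℂ) 2 →L[ℂ] lp (fun _ : Γ => ℂ) 2) (ha : a ∈ M) :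
    a.IsPositive ↔
      -- the Fourier coefficient â(γ) = (a δ_e)(γ) is σ-positive definite
      (∀ (n : ℕ) (g : Fin n → Γ) (c : Fin n → ℂ),
        0 ≤ ∑ i : Fin n, ∑ j : Fin n,
          σ (g j * (g i)⁻¹) (g i) * c i * conj (c j) *
            (a (lp.single 2 (1 : Γ) (1 : ℂ))) (g j * (g i)⁻¹)) := by
  -- basic facts about σ
  have hne : ∀ u v : Γ, σ u v ≠ 0 := fun u v h => by
    have := hσ_unit u v; rw [h] at this; simp at this
  have hmc : ∀ u v : Γ, σ u v * (starRingEnd ℂ) (σ u v) = 1 := fun u v => by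
    rw [Complex.mul_conj]
    norm_cast
    rw [Complex.normSq_eq_norm_sq, hσ_unit]
    norm_num
  have hconj : ∀ u v : Γ, (starRingEnd ℂ) (σ u v) = (σ u v)⁻¹ := fun u v =>
    eq_inv_of_mul_eq_one_left (by rw [mul_comm]; exact hmc u v)
  have hσ_right_one : ∀ x : Γ, σ x 1 = 1 := fun x => by
    have h := hσ_cocycle x 1 1
    simp only [mul_one, one_mul, hσ_one] at h
    exact mul_left_cancel₀ (hne x 1) (by rw [mul_one]; exact h)
  -- ρ commutes with λ
  have hrholam : ∀ γ x : Γ, rhoCLM σ hσ_unit γ * lam x = lam x * rhoCLM σ hσ_unit γ := by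
    intro γ x
    refine ContinuousLinearMap.ext fun f => lp.ext (funext fun γ' => ?_)
    rw [ContinuousLinearMap.mul_apply, ContinuousLinearMap.mul_apply,
      rhoCLM_apply, hlam, hlam, rhoCLM_apply]
    have key : σ x (x⁻¹ * γ') * σ γ' γ = σ x (x⁻¹ * (γ' * γ)) * σ (x⁻¹ * γ') γ := by
      have h := hσ_cocycle x (x⁻¹ * γ') γ
      rw [mul_inv_cancel_left, mul_assoc] at h
      exact h
    have hcoeff : (σ γ' γ)⁻¹ * σ x (x⁻¹ * (γ' * γ))
        = σ x (x⁻¹ * γ') * (σ (x⁻¹ * γ') γ)⁻¹ := by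
      rw [inv_mul_eq_div, ← div_eq_mul_inv,
        div_eq_div_iff (hne γ' γ) (hne (x⁻¹ * γ') γ)]
      linear_combination -key
    rw [hconj, hconj, ← mul_assoc x⁻¹ γ' γ]
    rw [← mul_assoc x⁻¹ γ' γ] at hcoeff
    linear_combination (show ℂ from f (x⁻¹ * γ' * γ)) * hcoeff
  -- a commutes with ρ
  rw [hM] at ha
  have hcomm : ∀ γ : Γ, a * rhoCLM σ hσ_unit γ = rhoCLM σ hσ_unit γ * a := fun γ =>
    ha _ (fun x => hrholam γ x)
  -- δ_g in terms of ρ applied to δ_e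
  have hdelta : ∀ g : Γ, lp.single 2 g (1 : ℂ)
      = σ g g⁻¹ • rhoCLM σ hσ_unit g⁻¹ (lp.single 2 (1 : Γ) (1 : ℂ)) := by
    intro g
    refine lp.ext (funext fun γ' => ?_)
    rw [lp.coeFn_smul, Pi.smul_apply, smul_eq_mul, rhoCLM_apply]
    by_cases h : γ' = g
    · subst h
      rw [lp.single_apply_self, mul_inv_cancel, lp.single_apply_self, mul_one,
        hmc]
    · rw [lp.single_apply_ne _ _ _ h, lp.single_apply_ne _ _ _ (by
        intro hh
        exact h (by
          have := congrArg (· * g) hh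
          simpa [inv_mul_cancel_right] using this)),
        mul_zero, mul_zero]
  -- key formula for Fourier coefficients
  have key : ∀ (g γ' : Γ), (a (lp.single 2 g (1 : ℂ))) γ' =
      σ (γ' * g⁻¹) g * (a (lp.single 2 (1 : Γ) (1 : ℂ))) (γ' * g⁻¹) := by
    intro g γ'
    have h1 : a (lp.single 2 g (1 : ℂ))
        = σ g g⁻¹ • rhoCLM σ hσ_unit g⁻¹ (a (lp.single 2 (1 : Γ) (1 : ℂ))) := by
      rw [hdelta g, map_smul]
      congr 1
      have h2 := congrArg (fun T => T (lp.single 2 (1 : Γ) (1 : ℂ))) (hcomm g⁻¹)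
      simpa [ContinuousLinearMap.mul_apply] using h2
    rw [h1, lp.coeFn_smul, Pi.smul_apply, smul_eq_mul, rhoCLM_apply]
    have hcoeff : σ g g⁻¹ * (starRingEnd ℂ) (σ γ' g⁻¹) = σ (γ' * g⁻¹) g := by
      have h := hσ_cocycle (γ' * g⁻¹) g g⁻¹
      rw [inv_mul_cancel_right, mul_inv_cancel, hσ_right_one, one_mul] at h
      rw [hconj, ← div_eq_mul_inv, div_eq_iff (hne γ' g⁻¹)]
      exact h.symm
    rw [← mul_assoc, hcoeff]
  -- the main identity: the p.d. sum is an inner product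
  have main : ∀ (n : ℕ) (g : Fin n → Γ) (c : Fin n → ℂ),
      (∑ i : Fin n, ∑ j : Fin n,
          σ (g j * (g i)⁻¹) (g i) * c i * conj (c j) *
            (a (lp.single 2 (1 : Γ) (1 : ℂ))) (g j * (g i)⁻¹))
      = inner (𝕜 := ℂ) (∑ i : Fin n, c i • lp.single 2 (g i) (1 : ℂ))
          (a (∑ i : Fin n, c i • lp.single 2 (g i) (1 : ℂ))) := by
    intro n g c
    rw [Finset.sum_comm, map_sum, sum_inner]
    refine Finset.sum_congr rfl fun j _ => ?_
    rw [inner_sum]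
    refine Finset.sum_congr rfl fun i _ => ?_
    rw [map_smul, inner_smul_left, inner_smul_right, lp.inner_single_left,
      RCLike.inner_apply, map_one, mul_one, key (g i) (g j)]
    ring
  constructor
  · -- positivity implies σ-positive definiteness
    intro hpos n g c
    obtain ⟨h1, h2⟩ := (ContinuousLinearMap.isPositive_iff_complex a).mp hpos
      (∑ i : Fin n, c i • lp.single 2 (g i) (1 : ℂ))
    rw [main n g c, ← inner_conj_symm, ← h1]
    simp only [RCLike.conj_ofReal, Complex.conj_ofReal]
    exact_mod_cast h2
  · -- σ-positive definiteness implies positivity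
    intro hpd
    rw [ContinuousLinearMap.isPositive_iff_complex]
    intro x
    set L : ℂ := inner ℂ (a x) x with hL
    -- partial sums converge to x
    have hsum := lp.hasSum_single (E := fun _ : Γ => ℂ) (p := 2) (by norm_num) x
    have hcontinner : Continuous fun y : lp (fun _ : Γ => ℂ) 2 => (inner ℂ (a y) y : ℂ) :=
      (a.continuous).inner continuous_id
    have htt : Filter.Tendsto
        (fun s : Finset Γ => (inner ℂ (a (∑ i ∈ s, lp.single 2 i (x i)))
          (∑ i ∈ s, lp.single 2 i (x i)) : ℂ)) Filter.atTop (nhds L) :=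
      (hcontinner.tendsto x).comp hsum
    -- each partial inner product is nonneg
    have hterm : ∀ s : Finset Γ, (0 : ℂ) ≤ conj (inner (𝕜 := ℂ)
        (a (∑ i ∈ s, lp.single 2 i (x i))) (∑ i ∈ s, lp.single 2 i (x i))) := by
      intro s
      set n := s.card
      set g : Fin n → Γ := fun k => ((s.equivFin.symm k : s) : Γ) with hg
      set c : Fin n → ℂ := fun k => x (g k) with hc
      have hone : ∀ k : Fin n, c k • lp.single 2 (g k) (1 : ℂ)
          = lp.single (E := fun _ : Γ => ℂ) 2 (g k) (c k) := fun k => by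
        have h := lp.single_smul (E := fun _ : Γ => ℂ) (𝕜 := ℂ) 2 (g k) (c k) (1 : ℂ)
        rw [smul_eq_mul, mul_one] at h
        exact h.symm
      have hrepr : (∑ k : Fin n, c k • lp.single 2 (g k) (1 : ℂ))
          = ∑ i ∈ s, lp.single 2 i (x i) := by
        rw [Finset.sum_congr rfl (fun k _ => hone k)]
        calc ∑ k : Fin n, lp.single (E := fun _ : Γ => ℂ) 2 (g k) (c k)
            = ∑ i : {y // y ∈ s}, lp.single (E := fun _ : Γ => ℂ) 2 (i : Γ) (x (i : Γ)) :=
              Fintype.sum_equiv s.equivFin.symm _ _ (fun k => rfl)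
          _ = ∑ i ∈ s, lp.single 2 i (x i) := by
              rw [Finset.univ_eq_attach]
              exact Finset.sum_attach s (fun i => lp.single (E := fun _ : Γ => ℂ) 2 i (x i))
      have h0 := hpd n g c
      rw [main n g c, hrepr, ← inner_conj_symm] at h0
      exact h0
    have hre : ∀ s : Finset Γ, 0 ≤ (inner (𝕜 := ℂ) (a (∑ i ∈ s, lp.single 2 i (x i)))
        (∑ i ∈ s, lp.single 2 i (x i))).re := by
      intro s
      have := (Complex.le_def.mp (hterm s)).1
      simp only [Complex.zero_re, Complex.conj_re] at this
      exact this
    have him : ∀ s : Finset Γ, (inner (𝕜 := ℂ) (a (∑ i ∈ s, lp.single 2 i (x i)))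
        (∑ i ∈ s, lp.single 2 i (x i))).im = 0 := by
      intro s
      have := (Complex.le_def.mp (hterm s)).2
      simp only [Complex.zero_im, Complex.conj_im] at this
      linarith
    have hreL : 0 ≤ L.re := by
      refine ge_of_tendsto ((Complex.continuous_re.tendsto L).comp htt) ?_
      exact Filter.Eventually.of_forall hre
    have himL : L.im = 0 := by
      have h1 : Filter.Tendsto (fun s : Finset Γ => (inner (𝕜 := ℂ)
          (a (∑ i ∈ s, lp.single 2 i (x i))) (∑ i ∈ s, lp.single 2 i (x i))).im)
          Filter.atTop (nhds L.im) := (Complex.continuous_im.tendsto L).comp htt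
      have h2 : Filter.Tendsto (fun s : Finset Γ => (inner (𝕜 := ℂ)
          (a (∑ i ∈ s, lp.single 2 i (x i))) (∑ i ∈ s, lp.single 2 i (x i))).im)
          Filter.atTop (nhds 0) := by
        simp only [him]
        exact tendsto_const_nhds
      exact tendsto_nhds_unique h1 h2
    constructor
    · apply Complex.ext
      · simp
      · simpa using himL.symm
    · simpa using hreL
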